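/- For every integer n ≥ 1, every q ∈ (0,1), and every x ∈ [0,1], the first moment of the operator satisfies the lower bound K_{n,q}^{β^(1),…,β^(r)}(s;x) ≥ x β_n^(r). -/

import Mathlib

open Filter Topology

noncomputable def qInt (q : ℝ) (m : ℕ) : ℝ := (1 - q ^ m) / (1 - q)

noncomputable def qPoch (ρ q : ℝ) (m : ℕ) : ℝ := ∏ i ∈ Finset.range m, (1 - ρ * q ^ i)

noncomputable def qRInt (q α β : ℝ) (f : ℝ → ℝ) : ℝ :=
  (1 - q) * (β - α) * ∑' j : ℕ, f (α + (β - α) * q ^ j) * q ^ j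

def lastIdx {r : ℕ} (l : Fin r → ℕ) : ℕ := if h : 0 < r then l ⟨r - 1, by omega⟩ else 0

noncomputable def Kop (r : ℕ) (β : Fin r → ℕ → ℝ) (n : ℕ) (q : ℝ) (f : ℝ → ℝ) (x : ℝ) : ℝ :=
  (∏ k : Fin r, qPoch (x * β k n) q n) *
    ∑' p : ℕ, (∑ l ∈ Finset.Nat.antidiagonalTuple r p,
      (∏ j : Fin r, qPoch (q ^ n) q (l j)) *
      (qInt q (n + lastIdx l - 1) * q ^ (-(lastIdx l : ℤ))) *
      (∏ j : Fin r, (β j n) ^ (l j) / qPoch q q (l j)) *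
      qRInt q (qInt q (lastIdx l) / qInt q (n + lastIdx l - 1))
        (qInt q (lastIdx l + 1) / qInt q (n + lastIdx l - 1)) f) * x ^ p

noncomputable def supNorm (g : ℝ → ℝ) : ℝ := ⨆ x : Set.Icc (0:ℝ) 1, |g x|

noncomputable def gammaK (q : ℝ) (n : ℕ) (b : ℝ) : ℝ :=
  4 * (1 - b) + (1 / qInt q n) * (b * (1 + 2 / qInt q 2) + 2 / qInt q 2) +
    1 / (qInt q 3 * (qInt q n) ^ 2)

noncomputable def modCont (f : ℝ → ℝ) (δ : ℝ) : ℝ :=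
  sSup {y : ℝ | ∃ s x : ℝ, s ∈ Set.Icc (0:ℝ) 1 ∧ x ∈ Set.Icc (0:ℝ) 1 ∧ |s - x| ≤ δ ∧ y = |f s - f x|}

noncomputable def dwS (b c : ℕ → ℕ) (s : ℕ → ℝ) (n : ℕ) : ℝ :=
  ∑ m ∈ Finset.Icc (b n + 1) (c n), s m

def DWAStatConv (b c : ℕ → ℕ) (s : ℕ → ℝ) (A : ℕ → ℕ → ℝ) (x : ℕ → ℝ) (l : ℝ) : Prop :=
  ∀ ε : ℝ, 0 < ε →
    Tendsto (fun n => (1 / dwS b c s n) *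
      ∑ m ∈ Finset.Icc (b n + 1) (c n),
        ∑' k : ℕ, Set.indicator {k : ℕ | ε ≤ |x k - l|} (fun k => s m * A m k) k)
      atTop (𝓝 0)

def DWRegular (b c : ℕ → ℕ) (s : ℕ → ℝ) (A : ℕ → ℕ → ℝ) : Prop :=
  ∀ (x : ℕ → ℝ) (l : ℝ), Tendsto x atTop (𝓝 l) →
    Tendsto (fun n => (1 / dwS b c s n) *
      ∑ m ∈ Finset.Icc (b n + 1) (c n), s m * ∑' k : ℕ, A m k * x k) atTop (𝓝 l)

noncomputable def pSum (p : ℕ → ℝ) (u : ℝ) : ℝ := ∑' j : ℕ, p (j + 1) * u ^ j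

noncomputable def leftFilter (R : ENNReal) : Filter ℝ :=
  if R = ⊤ then atTop else 𝓝[<] R.toReal

def PSConv (p : ℕ → ℝ) (R : ENNReal) (η : ℕ → ℝ) (l : ℝ) : Prop :=
  Tendsto (fun u => (1 / pSum p u) * ∑' j : ℕ, η (j + 1) * p (j + 1) * u ^ j)
    (leftFilter R) (𝓝 l)

def PSRadius (p : ℕ → ℝ) (R : ENNReal) : Prop :=
  ∀ u : ℝ, 0 ≤ u →
    ((ENNReal.ofReal u < R → Summable fun j : ℕ => p (j + 1) * u ^ j) ∧
     (R < ENNReal.ofReal u → ¬ Summable fun j : ℕ => p (j + 1) * u ^ j))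

def PSRegular (p : ℕ → ℝ) (R : ENNReal) : Prop :=
  ∀ j : ℕ, 1 ≤ j → Tendsto (fun u => p j * u ^ (j - 1) / pSum p u) (leftFilter R) (𝓝 0)




noncomputable def cq (q : ℝ) (n m : ℕ) : ℝ := qPoch (q ^ n) q m / qPoch q q m

lemma qPoch_zero (ρ q : ℝ) : qPoch ρ q 0 = 1 := by simp [qPoch]

lemma qPoch_succ (ρ q : ℝ) (m : ℕ) : qPoch ρ q (m + 1) = qPoch ρ q m * (1 - ρ * q ^ m) :=
  Finset.prod_range_succ _ _

lemma qPoch_succ' (ρ q : ℝ) (m : ℕ) : qPoch ρ q (m + 1) = (1 - ρ) * qPoch (ρ * q) q m := by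
  rw [qPoch, Finset.prod_range_succ']
  simp only [pow_zero, mul_one]
  rw [mul_comm]
  congr 1
  exact Finset.prod_congr rfl fun i _ => by ring

lemma qPoch_nonneg {q ρ : ℝ} (hq0 : 0 < q) (hq1 : q < 1) (hρ0 : 0 ≤ ρ) (hρ1 : ρ ≤ 1) (m : ℕ) :
    0 ≤ qPoch ρ q m := by
  refine Finset.prod_nonneg fun i _ => ?_
  have : ρ * q ^ i ≤ 1 := by
    calc ρ * q ^ i ≤ 1 * 1 := by
          apply mul_le_mul hρ1 (pow_le_one₀ hq0.le hq1.le) (pow_nonneg hq0.le _) one_pos.le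
      _ = 1 := by ring
  linarith

lemma qPoch_pos {q ρ : ℝ} (hq0 : 0 < q) (hq1 : q < 1) (hρ0 : 0 ≤ ρ) (hρ1 : ρ < 1) (m : ℕ) :
    0 < qPoch ρ q m := by
  refine Finset.prod_pos fun i _ => ?_
  have : ρ * q ^ i < 1 := by
    calc ρ * q ^ i ≤ ρ * 1 := by
          apply mul_le_mul_of_nonneg_left (pow_le_one₀ hq0.le hq1.le) hρ0
      _ < 1 := by linarith
  linarith

lemma cq_nonneg {q : ℝ} (hq0 : 0 < q) (hq1 : q < 1) (n m : ℕ) : 0 ≤ cq q n m :=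
  div_nonneg (qPoch_nonneg hq0 hq1 (pow_nonneg hq0.le _) (pow_le_one₀ hq0.le hq1.le) m)
    (qPoch_pos hq0 hq1 hq0.le hq1 m).le

lemma cq_zero (q : ℝ) (n : ℕ) : cq q n 0 = 1 := by simp [cq, qPoch]

lemma cq_succ {q : ℝ} (hq0 : 0 < q) (hq1 : q < 1) (n m : ℕ) :
    cq q n (m + 1) = cq q n m * ((1 - q ^ n * q ^ m) / (1 - q * q ^ m)) := by
  have h1 : qPoch q q m ≠ 0 := (qPoch_pos hq0 hq1 hq0.le hq1 m).ne'
  have h2 : (1 : ℝ) - q * q ^ m ≠ 0 := by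
    have : q * q ^ m < 1 := by
      calc q * q ^ m ≤ q * 1 := mul_le_mul_of_nonneg_left (pow_le_one₀ hq0.le hq1.le) hq0.le
        _ < 1 := by linarith
    linarith
  rw [cq, cq, qPoch_succ, qPoch_succ]
  field_simp

lemma cq_pascal {q : ℝ} (hq0 : 0 < q) (hq1 : q < 1) (n m : ℕ) :
    cq q (n + 1) (m + 1) = cq q n (m + 1) + q ^ n * cq q (n + 1) m := by
  have h1 : qPoch q q m ≠ 0 := (qPoch_pos hq0 hq1 hq0.le hq1 m).ne'
  have h2 : (1 : ℝ) - q * q ^ m ≠ 0 := by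
    have : q * q ^ m < 1 := by
      calc q * q ^ m ≤ q * 1 := mul_le_mul_of_nonneg_left (pow_le_one₀ hq0.le hq1.le) hq0.le
        _ < 1 := by linarith
    linarith
  have e1 : qPoch (q ^ (n + 1)) q (m + 1) = qPoch (q ^ (n + 1)) q m * (1 - q ^ (n + 1) * q ^ m) :=
    qPoch_succ _ _ _
  have e2 : qPoch (q ^ n) q (m + 1) = (1 - q ^ n) * qPoch (q ^ (n + 1)) q m := by
    rw [qPoch_succ', ← pow_succ]
  have e3 : qPoch q q (m + 1) = qPoch q q m * (1 - q * q ^ m) := qPoch_succ _ _ _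
  rw [cq, cq, cq, e1, e2, e3]
  rw [mul_div_assoc', div_add_div _ _ (mul_ne_zero h1 h2) h1,
    div_eq_div_iff (mul_ne_zero h1 h2) (mul_ne_zero (mul_ne_zero h1 h2) h1)]
  ring

lemma cq_step {q : ℝ} (hq0 : 0 < q) (hq1 : q < 1) (n m : ℕ) (hn : 1 ≤ n) :
    cq q n (m + 1) * (qInt q (m + 1) / qInt q (n + m)) = cq q n m := by
  have h1 : qPoch q q m ≠ 0 := (qPoch_pos hq0 hq1 hq0.le hq1 m).ne'
  have hq1' : (1 : ℝ) - q ≠ 0 := by linarith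
  have hm1 : (0:ℝ) < 1 - q ^ (m + 1) := by
    have := pow_lt_one₀ hq0.le hq1 (Nat.succ_ne_zero m)
    simp only [Nat.succ_eq_add_one] at this; linarith
  have hnm : (0:ℝ) < 1 - q ^ (n + m) := by
    have := pow_lt_one₀ hq0.le hq1 (by omega : n + m ≠ 0); linarith
  rw [cq, cq, qPoch_succ, qPoch_succ, qInt, qInt]
  have hpow : q ^ n * q ^ m = q ^ (n + m) := by rw [← pow_add]
  have hpow2 : q * q ^ m = q ^ (m + 1) := by rw [← pow_succ']
  rw [hpow, hpow2]
  field_simp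
lemma summable_cq {q t : ℝ} (hq0 : 0 < q) (hq1 : q < 1) (ht0 : 0 ≤ t) (ht1 : t < 1) (n : ℕ) :
    Summable fun m => cq q n m * t ^ m := by
  obtain ⟨N, hN⟩ := exists_pow_lt_of_lt_one (by linarith : (0:ℝ) < 1 - t) hq1
  have hqN : (0:ℝ) < 1 - q ^ N := by
    have : q ^ N < 1 := by nlinarith
    linarith
  set r : ℝ := t / (1 - q ^ N) with hr
  have hrlt : r < 1 := by
    rw [hr, div_lt_one hqN]; linarith
  refine summable_of_ratio_norm_eventually_le hrlt ?_
  filter_upwards [Filter.eventually_ge_atTop N] with m hm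
  have ha0 : ∀ k, 0 ≤ cq q n k * t ^ k := fun k =>
    mul_nonneg (cq_nonneg hq0 hq1 n k) (pow_nonneg ht0 k)
  rw [Real.norm_eq_abs, Real.norm_eq_abs, abs_of_nonneg (ha0 _), abs_of_nonneg (ha0 _)]
  have hden : (0:ℝ) < 1 - q * q ^ m := by
    have : q * q ^ m < 1 := by
      calc q * q ^ m ≤ q * 1 := mul_le_mul_of_nonneg_left (pow_le_one₀ hq0.le hq1.le) hq0.le
        _ < 1 := by linarith
    linarith
  have hqm : q * q ^ m ≤ q ^ N := by
    rw [← pow_succ']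
    exact pow_le_pow_of_le_one hq0.le hq1.le (by omega)
  have hfrac : (1 - q ^ n * q ^ m) / (1 - q * q ^ m) ≤ 1 / (1 - q ^ N) := by
    apply div_le_div₀ (by positivity) ?_ (by linarith) (by linarith)
    have : 0 ≤ q ^ n * q ^ m := by positivity
    linarith
  rw [cq_succ hq0 hq1, pow_succ]
  calc cq q n m * ((1 - q ^ n * q ^ m) / (1 - q * q ^ m)) * (t ^ m * t)
      = (cq q n m * t ^ m) * (t * ((1 - q ^ n * q ^ m) / (1 - q * q ^ m))) := by ring
    _ ≤ (cq q n m * t ^ m) * (t * (1 / (1 - q ^ N))) := by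
        apply mul_le_mul_of_nonneg_left (mul_le_mul_of_nonneg_left hfrac ht0) (ha0 m)
    _ = r * (cq q n m * t ^ m) := by rw [hr]; ring

lemma tsum_cq_mul_qPoch {q t : ℝ} (hq0 : 0 < q) (hq1 : q < 1) (ht0 : 0 ≤ t) (ht1 : t < 1) :
    ∀ n : ℕ, (∑' m, cq q n m * t ^ m) * qPoch t q n = 1 := by
  intro n
  induction n with
  | zero =>
    rw [qPoch_zero, mul_one]
    rw [tsum_eq_single 0 ?_]
    · simp [cq_zero]
    · intro m hm
      have : qPoch (q ^ 0) q m = 0 := by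
        rw [pow_zero]
        apply Finset.prod_eq_zero (Finset.mem_range.mpr (Nat.pos_of_ne_zero hm) : 0 ∈ _)
        simp
      rw [pow_zero] at this
      simp [cq, this]
  | succ n ih =>
    have S0 : Summable fun m => cq q n m * t ^ m := summable_cq hq0 hq1 ht0 ht1 n
    have S1 : Summable fun m => cq q (n + 1) m * t ^ m := summable_cq hq0 hq1 ht0 ht1 (n + 1)
    set F : ℕ → ℝ := fun k => ∑' m, cq q k m * t ^ m with hF
    have key : F (n + 1) = F n + t * q ^ n * F (n + 1) := by
      have h1 : F (n + 1) = cq q (n+1) 0 * t ^ 0 + ∑' m, cq q (n+1) (m+1) * t ^ (m+1) :=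
        Summable.tsum_eq_zero_add S1
      have h2 : ∀ m : ℕ, cq q (n+1) (m+1) * t ^ (m+1)
          = cq q n (m+1) * t ^ (m+1) + (t * q ^ n) * (cq q (n+1) m * t ^ m) := by
        intro m
        rw [cq_pascal hq0 hq1]
        ring
      have hS0' : Summable fun m => cq q n (m+1) * t ^ (m+1) := by
        exact_mod_cast (summable_nat_add_iff 1).mpr S0
      have h3 : ∑' m, cq q (n+1) (m+1) * t ^ (m+1)
          = (∑' m, cq q n (m+1) * t ^ (m+1)) + (t * q ^ n) * F (n + 1) := by
        calc ∑' m, cq q (n+1) (m+1) * t ^ (m+1)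
            = ∑' m, (cq q n (m+1) * t ^ (m+1) + (t * q ^ n) * (cq q (n+1) m * t ^ m)) :=
              tsum_congr h2
          _ = (∑' m, cq q n (m+1) * t ^ (m+1)) + ∑' m, (t * q ^ n) * (cq q (n+1) m * t ^ m) :=
              Summable.tsum_add hS0' (S1.mul_left _)
          _ = (∑' m, cq q n (m+1) * t ^ (m+1)) + (t * q ^ n) * F (n + 1) := by
              rw [tsum_mul_left]
      have h4 : F n = cq q n 0 * t ^ 0 + ∑' m, cq q n (m+1) * t ^ (m+1) := Summable.tsum_eq_zero_add S0
      calc F (n + 1) = 1 + ∑' m, cq q (n+1) (m+1) * t ^ (m+1) := by rw [h1]; simp [cq_zero]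
        _ = 1 + ((∑' m, cq q n (m+1) * t ^ (m+1)) + (t * q ^ n) * F (n + 1)) := by rw [h3]
        _ = (1 + ∑' m, cq q n (m+1) * t ^ (m+1)) + t * q ^ n * F (n + 1) := by ring
        _ = F n + t * q ^ n * F (n + 1) := by rw [h4]; simp [cq_zero]
    rw [qPoch_succ]
    show F (n + 1) * (qPoch t q n * (1 - t * q ^ n)) = 1
    have ih' : F n * qPoch t q n = 1 := ih
    linear_combination ih' + qPoch t q n * key

lemma qInt_zero (q : ℝ) : qInt q 0 = 0 := by simp [qInt]

lemma summable_cq_moment {q t : ℝ} (hq0 : 0 < q) (hq1 : q < 1) (ht0 : 0 ≤ t) (ht1 : t < 1)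
    {n : ℕ} (hn : 1 ≤ n) :
    Summable (fun m => cq q n m * (qInt q m / qInt q (n + m - 1)) * t ^ m) ∧
    (∑' m, cq q n m * (qInt q m / qInt q (n + m - 1)) * t ^ m) * qPoch t q n = t := by
  set b : ℕ → ℝ := fun m => cq q n m * (qInt q m / qInt q (n + m - 1)) * t ^ m with hb
  have hb0 : b 0 = 0 := by simp [hb, qInt_zero]
  have hbs : ∀ m : ℕ, b (m + 1) = (cq q n m * t ^ m) * t := by
    intro m
    have : n + (m + 1) - 1 = n + m := by omega
    rw [hb]
    simp only [this]
    rw [← cq_step hq0 hq1 n m hn]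
    ring
  have S0 : Summable fun m => cq q n m * t ^ m := summable_cq hq0 hq1 ht0 ht1 n
  have Sb : Summable b := by
    apply (summable_nat_add_iff 1).mp
    simpa only [hbs] using S0.mul_right t
  constructor
  · exact Sb
  · have : ∑' m, b m = b 0 + ∑' m, b (m + 1) := Summable.tsum_eq_zero_add Sb
    rw [this, hb0, zero_add]
    have : ∑' m, b (m + 1) = (∑' m, cq q n m * t ^ m) * t := by
      simp only [hbs]
      rw [tsum_mul_right]
    rw [this]
    have := tsum_cq_mul_qPoch hq0 hq1 ht0 ht1 n
    calc (∑' m, cq q n m * t ^ m) * t * qPoch t q n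
        = ((∑' m, cq q n m * t ^ m) * qPoch t q n) * t := by ring
      _ = t := by rw [this]; ring



lemma qRInt_id_eval {q α β : ℝ} (hq0 : 0 < q) (hq1 : q < 1) :
    qRInt q α β (fun s => s) = (β - α) * (α + (β - α) / (1 + q)) := by
  have hg1 : Summable fun j : ℕ => q ^ j := summable_geometric_of_lt_one hq0.le hq1
  have hg2 : Summable fun j : ℕ => (q ^ 2) ^ j :=
    summable_geometric_of_lt_one (by positivity) (by nlinarith)
  have hterm : ∀ j : ℕ, (α + (β - α) * q ^ j) * q ^ j = α * q ^ j + (β - α) * (q ^ 2) ^ j := by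
    intro j; rw [← pow_mul, mul_comm 2 j, pow_mul]; ring
  have hs : ∑' j : ℕ, (α + (β - α) * q ^ j) * q ^ j
      = α * (1 - q)⁻¹ + (β - α) * (1 - q ^ 2)⁻¹ := by
    rw [tsum_congr hterm, Summable.tsum_add (hg1.mul_left _) (hg2.mul_left _), tsum_mul_left,
      tsum_mul_left, tsum_geometric_of_lt_one hq0.le hq1,
      tsum_geometric_of_lt_one (by positivity) (by nlinarith)]
  rw [qRInt, hs]
  have h1 : (1:ℝ) - q ≠ 0 := by linarith
  have h2 : (1:ℝ) - q ^ 2 ≠ 0 := by nlinarith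
  have h3 : (1:ℝ) + q ≠ 0 := by linarith
  field_simp
  ring

lemma qRInt_id_bounds {q α β : ℝ} (hq0 : 0 < q) (hq1 : q < 1) (h0 : 0 ≤ α) (hαβ : α ≤ β) :
    (β - α) * α ≤ qRInt q α β (fun s => s) ∧ qRInt q α β (fun s => s) ≤ (β - α) * β := by
  rw [qRInt_id_eval hq0 hq1]
  have h1 : (0:ℝ) < 1 + q := by linarith
  have h2 : 0 ≤ (β - α) / (1 + q) := div_nonneg (by linarith) h1.le
  have h3 : (β - α) / (1 + q) ≤ β - α := by
    rw [div_le_iff₀ h1]; nlinarith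
  constructor
  · apply mul_le_mul_of_nonneg_left (by linarith) (by linarith)
  · apply mul_le_mul_of_nonneg_left (by linarith) (by linarith)

lemma qInt_nonneg {q : ℝ} (hq0 : 0 < q) (hq1 : q < 1) (m : ℕ) : 0 ≤ qInt q m := by
  have := pow_le_one₀ hq0.le hq1.le (n := m)
  have h1 : (0:ℝ) < 1 - q := by linarith
  exact div_nonneg (by linarith) h1.le

lemma qInt_pos {q : ℝ} (hq0 : 0 < q) (hq1 : q < 1) {m : ℕ} (hm : 1 ≤ m) : 0 < qInt q m := by
  have := pow_lt_one₀ hq0.le hq1 (by omega : m ≠ 0)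
  have h1 : (0:ℝ) < 1 - q := by linarith
  exact div_pos (by linarith) h1

lemma qInt_succ_sub {q : ℝ} (hq0 : 0 < q) (hq1 : q < 1) (m : ℕ) :
    qInt q (m + 1) - qInt q m = q ^ m := by
  have h1 : (1:ℝ) - q ≠ 0 := by linarith
  rw [qInt, qInt, div_sub_div_same, pow_succ]
  field_simp
  ring

lemma qInt_le_inv {q : ℝ} (hq0 : 0 < q) (hq1 : q < 1) (m : ℕ) : qInt q m ≤ 1 / (1 - q) := by
  have h1 : (0:ℝ) < 1 - q := by linarith
  rw [qInt, div_le_div_iff₀ h1 h1]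
  have : 0 ≤ q ^ m := by positivity
  nlinarith

lemma qInt_one_le {q : ℝ} (hq0 : 0 < q) (hq1 : q < 1) {m : ℕ} (hm : 1 ≤ m) : 1 ≤ qInt q m := by
  have h1 : (0:ℝ) < 1 - q := by linarith
  rw [qInt, le_div_iff₀ h1]
  have : q ^ m ≤ q ^ 1 := pow_le_pow_of_le_one hq0.le hq1.le hm
  simpa using by nlinarith

noncomputable def Dfun (q : ℝ) (n m : ℕ) : ℝ :=
  qInt q (n + m - 1) * q ^ (-(m:ℤ)) *
    qRInt q (qInt q m / qInt q (n + m - 1)) (qInt q (m + 1) / qInt q (n + m - 1)) (fun s => s)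

lemma Dfun_bounds {q : ℝ} (hq0 : 0 < q) (hq1 : q < 1) {n : ℕ} (hn : 1 ≤ n) (m : ℕ) :
    qInt q m / qInt q (n + m - 1) ≤ Dfun q n m ∧ Dfun q n m ≤ 1 / (1 - q) := by
  have h1q : (0:ℝ) < 1 - q := by linarith
  rcases Nat.eq_zero_or_pos (n + m - 1) with hN | hN
  · have hD : Dfun q n m = 0 := by
      rw [Dfun, hN, qInt_zero]; ring
    rw [hD, hN, qInt_zero, div_zero]
    exact ⟨le_refl 0, by positivity⟩
  · set N := n + m - 1 with hNdef
    have hqN : 0 < qInt q N := qInt_pos hq0 hq1 hN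
    set a := qInt q m / qInt q N with ha
    set b := qInt q (m + 1) / qInt q N with hbdef
    have ha0 : 0 ≤ a := div_nonneg (qInt_nonneg hq0 hq1 m) hqN.le
    have hba : b - a = q ^ m / qInt q N := by
      rw [ha, hbdef, div_sub_div_same, qInt_succ_sub hq0 hq1]
    have hab : a ≤ b := by
      have : 0 ≤ q ^ m / qInt q N := by positivity
      linarith
    obtain ⟨hlow, hhigh⟩ := qRInt_id_bounds hq0 hq1 ha0 hab (q := q) (α := a) (β := b)
    have hz : (q : ℝ) ^ (-(m:ℤ)) = (q ^ m)⁻¹ := by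
      rw [zpow_neg, zpow_natCast]
    have hzpos : (0:ℝ) < (q ^ m)⁻¹ := by positivity
    have hfac : qInt q N * (q ^ m)⁻¹ * (b - a) = 1 := by
      rw [hba]
      field_simp
    constructor
    · have : qInt q N * (q ^ m)⁻¹ * ((b - a) * a) ≤ qInt q N * (q ^ m)⁻¹ *
          qRInt q a b (fun s => s) := by
        apply mul_le_mul_of_nonneg_left hlow (by positivity)
      calc a = qInt q N * (q ^ m)⁻¹ * (b - a) * a := by rw [hfac]; ring
        _ ≤ qInt q N * (q ^ m)⁻¹ * qRInt q a b (fun s => s) := by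
            calc qInt q N * (q ^ m)⁻¹ * (b - a) * a
                = qInt q N * (q ^ m)⁻¹ * ((b - a) * a) := by ring
              _ ≤ _ := this
        _ = Dfun q n m := by rw [Dfun, ← hNdef, hz, ← ha, ← hbdef]
    · have hstep : qInt q N * (q ^ m)⁻¹ * qRInt q a b (fun s => s)
          ≤ qInt q N * (q ^ m)⁻¹ * ((b - a) * b) := by
        apply mul_le_mul_of_nonneg_left hhigh (by positivity)
      have hb1 : b ≤ 1 / (1 - q) := by
        rw [hbdef]
        calc qInt q (m + 1) / qInt q N ≤ qInt q (m + 1) / 1 := by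
              apply div_le_div_of_nonneg_left (qInt_nonneg hq0 hq1 _) one_pos
                (qInt_one_le hq0 hq1 hN)
          _ = qInt q (m + 1) := by ring
          _ ≤ 1 / (1 - q) := qInt_le_inv hq0 hq1 _
      calc Dfun q n m = qInt q N * (q ^ m)⁻¹ * qRInt q a b (fun s => s) := by
            rw [Dfun, ← hNdef, hz, ← ha, ← hbdef]
        _ ≤ qInt q N * (q ^ m)⁻¹ * ((b - a) * b) := hstep
        _ = qInt q N * (q ^ m)⁻¹ * (b - a) * b := by ring
        _ = b := by rw [hfac]; ring
        _ ≤ 1 / (1 - q) := hb1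
lemma tsum_pi_prod : ∀ (r : ℕ) (g : Fin r → ℕ → ℝ), (∀ j m, 0 ≤ g j m) →
    (∀ j, Summable (g j)) →
    Summable (fun l : Fin r → ℕ => ∏ j, g j (l j)) ∧
      (∑' l : Fin r → ℕ, ∏ j, g j (l j)) = ∏ j, ∑' m, g j m := by
  intro r
  induction r with
  | zero =>
    intro g _ _
    haveI : Subsingleton (Fin 0 → ℕ) := ⟨fun a b => funext fun i => i.elim0⟩
    haveI : Fintype (Fin 0 → ℕ) := Fintype.ofSubsingleton (fun i => i.elim0)
    constructor
    · exact (hasSum_fintype _).summable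
    · rw [tsum_fintype]
      simp
  | succ r ih =>
    intro g hg0 hgs
    set e := Fin.consEquiv (fun _ : Fin (r + 1) => ℕ) with he
    obtain ⟨ihS, ihT⟩ := ih (fun j => g j.succ) (fun j m => hg0 j.succ m) (fun j => hgs j.succ)
    set G1 : (Fin r → ℕ) → ℝ := fun b => ∏ j : Fin r, g j.succ (b j) with hG1
    have hcomp : ∀ p : ℕ × (Fin r → ℕ),
        (fun l : Fin (r+1) → ℕ => ∏ j, g j (l j)) (e p) = g 0 p.1 * G1 p.2 := by
      intro p
      simp only [he, Fin.consEquiv_apply, hG1]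
      rw [Fin.prod_univ_succ]
      simp [Fin.cons_zero, Fin.cons_succ]
    have hprodsum : Summable (fun p : ℕ × (Fin r → ℕ) => g 0 p.1 * G1 p.2) := by
      apply Summable.mul_of_nonneg (hgs 0) ihS
      · intro m
        exact hg0 0 m
      · intro l
        exact Finset.prod_nonneg fun j _ => hg0 j.succ (l j)
    have hS : Summable (fun l : Fin (r+1) → ℕ => ∏ j, g j (l j)) := by
      rw [← e.summable_iff]
      exact hprodsum.congr fun p => (hcomp p).symm
    refine ⟨hS, ?_⟩
    rw [← e.tsum_eq (fun l : Fin (r+1) → ℕ => ∏ j, g j (l j))]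
    calc ∑' p : ℕ × (Fin r → ℕ), (fun l : Fin (r+1) → ℕ => ∏ j, g j (l j)) (e p)
        = ∑' p : ℕ × (Fin r → ℕ), g 0 p.1 * G1 p.2 := tsum_congr hcomp
      _ = (∑' a, g 0 a) * ∑' b, G1 b := (Summable.tsum_mul_tsum (hgs 0) ihS hprodsum).symm
      _ = ∏ j : Fin (r+1), ∑' m, g j m := by
          rw [hG1, ihT, Fin.prod_univ_succ]

lemma tsum_antidiagonalTuple (r : ℕ) (F : (Fin r → ℕ) → ℝ) (hF : Summable F) :
    Summable (fun p => ∑ l ∈ Finset.Nat.antidiagonalTuple r p, F l) ∧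
    (∑' p, ∑ l ∈ Finset.Nat.antidiagonalTuple r p, F l) = ∑' l, F l := by
  set e := Finset.Nat.sigmaAntidiagonalTupleEquivTuple r with he
  have hFe : Summable (F ∘ e) := e.summable_iff.mpr hF
  have hfib : ∀ p : ℕ, ∑' c : Finset.Nat.antidiagonalTuple r p, (F ∘ e) ⟨p, c⟩
      = ∑ l ∈ Finset.Nat.antidiagonalTuple r p, F l := by
    intro p
    exact Finset.tsum_subtype _ F
  have hsig : Summable fun p : ℕ => ∑' c : Finset.Nat.antidiagonalTuple r p, (F ∘ e) ⟨p, c⟩ :=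
    hFe.sigma
  constructor
  · exact hsig.congr hfib
  · calc ∑' p, ∑ l ∈ Finset.Nat.antidiagonalTuple r p, F l
        = ∑' p, ∑' c : Finset.Nat.antidiagonalTuple r p, (F ∘ e) ⟨p, c⟩ :=
          tsum_congr fun p => (hfib p).symm
      _ = ∑' σ : Σ p, Finset.Nat.antidiagonalTuple r p, (F ∘ e) σ :=
          (Summable.tsum_sigma' (fun p => hFe.sigma_factor p) hFe).symm
      _ = ∑' l, F l := e.tsum_eq F


theorem stmt2 (r : ℕ) (hr : 1 ≤ r) (β : Fin r → ℕ → ℝ)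
    (hβ : ∀ (j : Fin r) (n : ℕ), 1 ≤ n → β j n ∈ Set.Ioo (0:ℝ) 1)
    (n : ℕ) (hn : 1 ≤ n) (q : ℝ) (hq : q ∈ Set.Ioo (0:ℝ) 1)
    (x : ℝ) (hx : x ∈ Set.Icc (0:ℝ) 1) :
    x * β ⟨r - 1, by omega⟩ n ≤ Kop r β n q (fun s => s) x := by
  classical
  obtain ⟨hq0, hq1⟩ := hq
  obtain ⟨hx0, hx1⟩ := hx
  have hrpos : 0 < r := hr
  set last : Fin r := ⟨r - 1, by omega⟩ with hlast
  suffices h : x * β last n ≤ Kop r β n q (fun s => s) x by exact h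
  have ht0 : ∀ j : Fin r, 0 ≤ x * β j n := fun j => mul_nonneg hx0 (hβ j n hn).1.le
  have ht1 : ∀ j : Fin r, x * β j n < 1 := by
    intro j
    calc x * β j n ≤ 1 * β j n := mul_le_mul_of_nonneg_right hx1 (hβ j n hn).1.le
      _ = β j n := one_mul _
      _ < 1 := (hβ j n hn).2
  set g : Fin r → ℕ → ℝ :=
    fun j m => cq q n m * (x * β j n) ^ m * (if j = last then Dfun q n m else 1) with hg
  have hDb : ∀ m, qInt q m / qInt q (n + m - 1) ≤ Dfun q n m ∧ Dfun q n m ≤ 1 / (1 - q) :=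
    Dfun_bounds hq0 hq1 hn
  have hDnn : ∀ m, 0 ≤ Dfun q n m := fun m =>
    le_trans (div_nonneg (qInt_nonneg hq0 hq1 m) (qInt_nonneg hq0 hq1 _)) (hDb m).1
  have hbase : ∀ j : Fin r, ∀ m : ℕ, 0 ≤ cq q n m * (x * β j n) ^ m := fun j m =>
    mul_nonneg (cq_nonneg hq0 hq1 n m) (pow_nonneg (ht0 j) m)
  have hg0 : ∀ j m, 0 ≤ g j m := by
    intro j m
    simp only [hg]
    by_cases hj : j = last
    · rw [if_pos hj]
      exact mul_nonneg (hbase j m) (hDnn m)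
    · rw [if_neg hj, mul_one]
      exact hbase j m
  have hgs : ∀ j, Summable (g j) := by
    intro j
    by_cases hj : j = last
    · refine Summable.of_nonneg_of_le (hg0 j) (fun m => ?_)
        ((summable_cq hq0 hq1 (ht0 j) (ht1 j) n).mul_left (1 / (1 - q)))
      simp only [hg]
      rw [if_pos hj]
      calc cq q n m * (x * β j n) ^ m * Dfun q n m
          ≤ cq q n m * (x * β j n) ^ m * (1 / (1 - q)) :=
            mul_le_mul_of_nonneg_left (hDb m).2 (hbase j m)
        _ = 1 / (1 - q) * (cq q n m * (x * β j n) ^ m) := by ring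
    · have : g j = fun m => cq q n m * (x * β j n) ^ m := by
        funext m; simp only [hg]; rw [if_neg hj, mul_one]
      rw [this]
      exact summable_cq hq0 hq1 (ht0 j) (ht1 j) n
  obtain ⟨hSS, hST⟩ := tsum_pi_prod r g hg0 hgs
  obtain ⟨hAS, hAT⟩ := tsum_antidiagonalTuple r (fun l => ∏ j, g j (l j)) hSS
  have hKop : Kop r β n q (fun s => s) x
      = (∏ k, qPoch (x * β k n) q n) * ∑' p, ∑ l ∈ Finset.Nat.antidiagonalTuple r p,
          ∏ j, g j (l j) := by
    rw [Kop]
    congr 1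
    refine tsum_congr fun p => ?_
    rw [Finset.sum_mul]
    refine Finset.sum_congr rfl fun l hl => ?_
    have hl' : ∑ j, l j = p := Finset.Nat.mem_antidiagonalTuple.mp hl
    have hli : lastIdx l = l last := by
      rw [lastIdx, dif_pos hrpos]
    have hRHS : ∏ j, g j (l j)
        = (∏ j, cq q n (l j) * (x * β j n) ^ (l j)) * Dfun q n (l last) := by
      simp only [hg]
      simp only [Finset.prod_mul_distrib, Finset.prod_ite_eq', Finset.mem_univ, if_true]
    rw [hRHS, Dfun, hli, ← hl', ← Finset.prod_pow_eq_pow_sum]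
    simp only [cq, mul_pow, Finset.prod_mul_distrib, Finset.prod_div_distrib]
    ring
  rw [hKop, hAT, hST]
  have hpoch_pos : ∀ j : Fin r, 0 < qPoch (x * β j n) q n := fun j =>
    qPoch_pos hq0 hq1 (ht0 j) (ht1 j) n
  have hfact : (∏ k, qPoch (x * β k n) q n) * ∏ j, ∑' m, g j m
      = ∏ j, (qPoch (x * β j n) q n * ∑' m, g j m) := (Finset.prod_mul_distrib).symm
  rw [hfact]
  rw [← Finset.mul_prod_erase Finset.univ _ (Finset.mem_univ last)]
  have herase : ∏ j ∈ Finset.univ.erase last, (qPoch (x * β j n) q n * ∑' m, g j m) = 1 := by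
    refine Finset.prod_eq_one fun j hj => ?_
    have hj' : j ≠ last := (Finset.mem_erase.mp hj).1
    have : (∑' m, g j m) = ∑' m, cq q n m * (x * β j n) ^ m := by
      refine tsum_congr fun m => ?_
      simp only [hg]; rw [if_neg hj', mul_one]
    rw [this, mul_comm]
    exact tsum_cq_mul_qPoch hq0 hq1 (ht0 j) (ht1 j) n
  rw [herase, mul_one]
  -- now: x * β last n ≤ qPoch (x * β last n) q n * ∑' m, g last m
  obtain ⟨hbS, hbT⟩ := summable_cq_moment hq0 hq1 (ht0 last) (ht1 last) hn
  have hmono : (∑' m, cq q n m * (qInt q m / qInt q (n + m - 1)) * (x * β last n) ^ m)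
      ≤ ∑' m, g last m := by
    refine Summable.tsum_le_tsum (fun m => ?_) hbS (hgs last)
    simp only [hg, if_true, eq_self_iff_true]
    calc cq q n m * (qInt q m / qInt q (n + m - 1)) * (x * β last n) ^ m
        = (cq q n m * (x * β last n) ^ m) * (qInt q m / qInt q (n + m - 1)) := by ring
      _ ≤ (cq q n m * (x * β last n) ^ m) * Dfun q n m :=
          mul_le_mul_of_nonneg_left (hDb m).1 (hbase last m)
  calc x * β last n
      = (∑' m, cq q n m * (qInt q m / qInt q (n + m - 1)) * (x * β last n) ^ m)
          * qPoch (x * β last n) q n := hbT.symm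
    _ ≤ (∑' m, g last m) * qPoch (x * β last n) q n :=
        mul_le_mul_of_nonneg_right hmono (hpoch_pos last).le
    _ = qPoch (x * β last n) q n * ∑' m, g last m := mul_comm _ _
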